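/- Let G be a graph on n ≥ 4 vertices obtained from a simple star (center v_1 adjacent to all other vertices) by adding a single additional edge between two non-central vertices, with positive real edge weights. Then the distance matrix D(G) has exactly 1 positive eigenvalue and n−1 negative eigenvalues, i.e., its inertia is (1, 0, n−1); in particular D(G) is strongly unipositive. -/

import Mathlib

open Matrix

/-- Number of positive eigenvalues (with multiplicity) of a real symmetric matrix. -/
noncomputable def posEig {n : ℕ} {A : Matrix (Fin n) (Fin n) ℝ} (hA : A.IsHermitian) : ℕ :=
  Nat.card {i : Fin n // 0 < hA.eigenvalues i}

noncomputable def zeroEig {n : ℕ} {A : Matrix (Fin n) (Fin n) ℝ} (hA : A.IsHermitian) : ℕ :=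
  Nat.card {i : Fin n // hA.eigenvalues i = 0}

noncomputable def negEig {n : ℕ} {A : Matrix (Fin n) (Fin n) ℝ} (hA : A.IsHermitian) : ℕ :=
  Nat.card {i : Fin n // hA.eigenvalues i < 0}

/-- Total weight of a walk: sum of weights of its edges. -/
noncomputable def walkWeight {V : Type*} {G : SimpleGraph V} (w : Sym2 V → ℝ)
    {u v : V} (p : G.Walk u v) : ℝ :=
  (p.edges.map w).sum

/-- Weighted shortest-path distance. -/
noncomputable def wdist {V : Type*} (G : SimpleGraph V) (w : Sym2 V → ℝ) (u v : V) : ℝ :=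
  sInf {x | ∃ p : G.Walk u v, walkWeight w p = x}

/-- The distance matrix of a weighted graph on `Fin n`. -/
noncomputable def distMatrix {n : ℕ} (G : SimpleGraph (Fin n)) (w : Sym2 (Fin n) → ℝ) :
    Matrix (Fin n) (Fin n) ℝ :=
  Matrix.of fun i j => wdist G w i j

lemma quad_eq_sum {n : ℕ} {A : Matrix (Fin n) (Fin n) ℝ} (hA : A.IsHermitian) (x : Fin n → ℝ) :
    x ⬝ᵥ A *ᵥ x = ∑ i, hA.eigenvalues i *
      ((star (hA.eigenvectorUnitary : Matrix (Fin n) (Fin n) ℝ) *ᵥ x) i)^2 := by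
  set U := (hA.eigenvectorUnitary : Matrix (Fin n) (Fin n) ℝ) with hU
  have h := hA.spectral_theorem
  conv_lhs => rw [h, Unitary.conjStarAlgAut_apply, ← hU]
  have hstar : star U = Uᵀ := by
    ext i j; simp [Matrix.star_eq_conjTranspose, Matrix.conjTranspose_apply]
  rw [← Matrix.mulVec_mulVec, ← Matrix.mulVec_mulVec, Matrix.dotProduct_mulVec (v := x) (A := U)]
  have hx : x ᵥ* U = star U *ᵥ x := by rw [hstar, Matrix.mulVec_transpose]
  rw [hx]
  simp [Matrix.mulVec_diagonal, dotProduct, mul_comm, pow_two, mul_assoc, mul_left_comm]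

lemma le_negEig {n k : ℕ} {A : Matrix (Fin n) (Fin n) ℝ} (hA : A.IsHermitian)
    (f : (Fin k → ℝ) →ₗ[ℝ] (Fin n → ℝ)) (hf : Function.Injective f)
    (h : ∀ y, y ≠ 0 → f y ⬝ᵥ A *ᵥ f y < 0) : k ≤ negEig hA := by
  classical
  set U := (hA.eigenvectorUnitary : Matrix (Fin n) (Fin n) ℝ)
  let g : (Fin k → ℝ) →ₗ[ℝ] ({i : Fin n // hA.eigenvalues i < 0} → ℝ) :=
    (LinearMap.funLeft ℝ ℝ Subtype.val) ∘ₗ (Matrix.mulVecLin (star U)) ∘ₗ f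
  have hg : Function.Injective g := by
    rw [← LinearMap.ker_eq_bot, LinearMap.ker_eq_bot']
    intro y hy
    by_contra hy0
    have hq := h y hy0
    rw [quad_eq_sum hA] at hq
    have : (0:ℝ) ≤ ∑ i, hA.eigenvalues i * ((star U *ᵥ f y) i)^2 := by
      apply Finset.sum_nonneg
      intro i _
      by_cases hi : hA.eigenvalues i < 0
      · have : (star U *ᵥ f y) i = 0 := congrFun hy ⟨i, hi⟩
        rw [this]; simp
      · exact mul_nonneg (le_of_not_gt hi) (sq_nonneg _)
    linarith
  have := LinearMap.finrank_le_finrank_of_injective hg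
  simpa [Module.finrank_fintype_fun_eq_card, Nat.card_eq_fintype_card, negEig] using this

lemma one_le_posEig {n : ℕ} {A : Matrix (Fin n) (Fin n) ℝ} (hA : A.IsHermitian)
    (x : Fin n → ℝ) (h : 0 < x ⬝ᵥ A *ᵥ x) : 1 ≤ posEig hA := by
  have : ∃ i, 0 < hA.eigenvalues i := by
    by_contra hc
    push_neg at hc
    rw [quad_eq_sum hA] at h
    have : ∑ i, hA.eigenvalues i *
        ((star (hA.eigenvectorUnitary : Matrix (Fin n) (Fin n) ℝ) *ᵥ x) i)^2 ≤ 0 := by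
      apply Finset.sum_nonpos
      intro i _
      exact mul_nonpos_of_nonpos_of_nonneg (hc i) (sq_nonneg _)
    linarith
  obtain ⟨i, hi⟩ := this
  have : Nonempty {i : Fin n // 0 < hA.eigenvalues i} := ⟨⟨i, hi⟩⟩
  simpa [posEig] using Nat.one_le_iff_ne_zero.mpr (Nat.card_ne_zero.mpr ⟨this, inferInstance⟩)

lemma eig_card_sum {n : ℕ} {A : Matrix (Fin n) (Fin n) ℝ} (hA : A.IsHermitian) :
    posEig hA + Nat.card {i : Fin n // hA.eigenvalues i = 0} + negEig hA = n := by
  classical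
  simp only [posEig, negEig, Nat.card_eq_fintype_card, Fintype.card_subtype]
  have h1 : (Finset.univ.filter fun i => 0 < hA.eigenvalues i).card
      + (Finset.univ.filter fun i => ¬ 0 < hA.eigenvalues i).card = n := by
    rw [Finset.card_filter_add_card_filter_not]; simp
  have h2 : (Finset.univ.filter fun i => ¬ 0 < hA.eigenvalues i)
      = (Finset.univ.filter fun i => hA.eigenvalues i = 0)
        ∪ (Finset.univ.filter fun i => hA.eigenvalues i < 0) := by
    ext i
    simp only [Finset.mem_union, Finset.mem_filter, Finset.mem_univ, true_and, not_lt]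
    constructor
    · intro h; rcases lt_or_eq_of_le h with h|h
      · exact Or.inr h
      · exact Or.inl h
    · rintro (h|h) <;> linarith
  have h3 : Disjoint (Finset.univ.filter fun i => hA.eigenvalues i = 0)
      (Finset.univ.filter fun i => hA.eigenvalues i < 0) := by
    simp only [Finset.disjoint_left, Finset.mem_filter, Finset.mem_univ, true_and]
    intro i h h'; linarith
  rw [h2, Finset.card_union_of_disjoint h3] at h1
  omega

noncomputable def consMap (m : ℕ) : (Fin m → ℝ) →ₗ[ℝ] (Fin (m+1) → ℝ) where
  toFun y := Fin.cons (-(∑ i, y i)) y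
  map_add' y z := by
    funext i
    refine Fin.cases ?_ (fun j => ?_) i <;> simp [Finset.sum_add_distrib] <;> ring
  map_smul' r y := by
    funext i
    refine Fin.cases ?_ (fun j => ?_) i <;> simp [Finset.mul_sum]

lemma consMap_inj (m : ℕ) : Function.Injective (consMap m) := by
  intro y z h
  funext i
  have := congrFun h i.succ
  simpa [consMap] using this

lemma consMap_sum (m : ℕ) (y : Fin m → ℝ) : ∑ i, consMap m y i = 0 := by
  simp [consMap, Fin.sum_cons]

lemma consMap_ne_zero (m : ℕ) {y : Fin m → ℝ} (hy : y ≠ 0) : consMap m y ≠ 0 := by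
  intro h
  apply hy
  funext i
  have := congrFun h i.succ
  simpa [consMap] using this

lemma inertia_main {n : ℕ} (hn : 1 ≤ n) {A : Matrix (Fin n) (Fin n) ℝ} (hA : A.IsHermitian)
    (hneg : ∀ x : Fin n → ℝ, x ≠ 0 → (∑ i, x i) = 0 → x ⬝ᵥ A *ᵥ x < 0)
    (x₀ : Fin n → ℝ) (hpos : 0 < x₀ ⬝ᵥ A *ᵥ x₀) :
    posEig hA = 1 ∧ Nat.card {i : Fin n // hA.eigenvalues i = 0} = 0 ∧ negEig hA = n - 1 := by
  obtain ⟨m, rfl⟩ : ∃ m, n = m + 1 := ⟨n - 1, (Nat.succ_pred_eq_of_pos hn).symm⟩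
  have h1 : 1 ≤ posEig hA := one_le_posEig hA x₀ hpos
  have h2 : m ≤ negEig hA := by
    apply le_negEig hA (consMap m) (consMap_inj m)
    intro y hy
    exact hneg _ (consMap_ne_zero m hy) (consMap_sum m y)
  have h3 := eig_card_sum hA
  refine ⟨by omega, by omega, by omega⟩

section graphpart
variable {n : ℕ} (G : SimpleGraph (Fin n)) (c a b : Fin n) (w : Sym2 (Fin n) → ℝ)

/-- the `u` function : distance to the center -/
noncomputable def ufun : Fin n → ℝ := fun i =>
  if i = c then 0
  else if i = a then min (w s(c,a)) (w s(c,b) + w s(a,b))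
  else if i = b then min (w s(c,b)) (w s(c,a) + w s(a,b))
  else w s(c,i)

/-- explicit distance function -/
noncomputable def ddfun : Fin n → Fin n → ℝ := fun i j =>
  if i = j then 0
  else if s(i,j) = s(a,b) then min (w s(a,b)) (w s(c,a) + w s(c,b))
  else ufun c a b w i + ufun c a b w j

lemma wdist_eq_ddfun (hab : a ≠ b) (hac : a ≠ c) (hbc : b ≠ c)
    (hG : ∀ i j, G.Adj i j ↔ i ≠ j ∧ (i = c ∨ j = c ∨ s(i, j) = s(a, b)))
    (hw : ∀ e ∈ G.edgeSet, 0 < w e) : ∀ i j, wdist G w i j = ddfun c a b w i j := by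
  classical
  set Wa := w s(c,a) with hWa_def
  set Wb := w s(c,b) with hWb_def
  set t := w s(a,b) with ht_def
  set u := ufun c a b w with hu_def
  set dab := min t (Wa + Wb) with hdab_def
  set dd := ddfun c a b w with hdd_def
  -- adjacency facts
  have adjc : ∀ {x}, x ≠ c → G.Adj c x := fun hx => (hG _ _).2 ⟨Ne.symm hx, Or.inl rfl⟩
  have adjc' : ∀ {x}, x ≠ c → G.Adj x c := fun hx => (hG _ _).2 ⟨hx, Or.inr (Or.inl rfl)⟩
  have adjab : G.Adj a b := (hG _ _).2 ⟨hab, Or.inr (Or.inr rfl)⟩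
  have adjba : G.Adj b a := (hG _ _).2 ⟨hab.symm, Or.inr (Or.inr (Sym2.eq_swap))⟩
  -- weight positivity
  have hWpos : ∀ x, x ≠ c → 0 < w s(c,x) := fun x hx => hw _ (G.mem_edgeSet.2 (adjc hx))
  have hWa : 0 < Wa := hWpos a hac
  have hWb : 0 < Wb := hWpos b hbc
  have ht : 0 < t := hw _ (G.mem_edgeSet.2 adjab)
  -- u evaluations
  have hu_c : u c = 0 := by rw [hu_def]; simp [ufun]
  have hu_a : u a = min Wa (Wb + t) := by rw [hu_def]; simp [ufun, hac]; rfl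
  have hu_b : u b = min Wb (Wa + t) := by rw [hu_def]; simp [ufun, hbc, hab.symm]; rfl
  have hu_x : ∀ x, x ≠ c → x ≠ a → x ≠ b → u x = w s(c,x) := by
    intro x h1 h2 h3; rw [hu_def]; simp [ufun, h1, h2, h3]
  have upos : ∀ x, x ≠ c → 0 < u x := by
    intro x hx
    by_cases h2 : x = a
    · subst h2; rw [hu_a]; positivity
    by_cases h3 : x = b
    · subst h3; rw [hu_b]; positivity
    · rw [hu_x x hx h2 h3]; exact hWpos x hx
  have unn : ∀ x, 0 ≤ u x := by
    intro x; by_cases hx : x = c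
    · subst hx; rw [hu_c]
    · exact le_of_lt (upos x hx)
  have hdab : 0 < dab := by rw [hdab_def]; positivity
  -- dd evaluations
  have sym2_ne : ∀ x : Fin n, x ≠ a → x ≠ b → ∀ y, s(x,y) ≠ s(a,b) := by
    intro x h1 h2 y h
    rw [Sym2.eq_iff] at h
    rcases h with ⟨h,_⟩|⟨h,_⟩ <;> [exact h1 h; exact h2 h]
  have sym2_ne' : ∀ x : Fin n, x ≠ a → x ≠ b → ∀ y, s(y,x) ≠ s(a,b) := by
    intro x h1 h2 y h
    rw [Sym2.eq_iff] at h
    rcases h with ⟨_,h⟩|⟨_,h⟩ <;> [exact h2 h; exact h1 h]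
  have dd_self : ∀ i, dd i i = 0 := by intro i; rw [hdd_def]; simp [ddfun]
  have dd_ab : dd a b = dab := by
    rw [hdd_def]; simp [ddfun, hab]; rfl
  have dd_ba : dd b a = dab := by
    rw [hdd_def]; simp [ddfun, hab.symm, Sym2.eq_swap]; rfl
  have dd_uu : ∀ i j, i ≠ j → s(i,j) ≠ s(a,b) → dd i j = u i + u j := by
    intro i j h1 h2; rw [hdd_def]; simp [ddfun, h1, h2, hu_def]
  have dd_symm : ∀ i j, dd i j = dd j i := by
    intro i j; rw [hdd_def]; simp only [ddfun]
    by_cases h : i = j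
    · simp [h]
    · have h' : ¬ (j = i) := fun hh => h hh.symm
      simp only [h, h', if_false]
      rw [show s(i,j) = s(j,i) from Sym2.eq_swap]
      by_cases hs : s(j,i) = s(a,b) <;> simp [hs, add_comm]
  have dd_c : ∀ j, j ≠ c → dd c j = u j := by
    intro j hj
    rw [dd_uu c j (Ne.symm hj) (sym2_ne c (Ne.symm hac) (Ne.symm hbc) j), hu_c, zero_add]
  have dd_nn : ∀ i j, 0 ≤ dd i j := by
    intro i j
    by_cases h1 : i = j
    · subst h1; rw [dd_self]
    by_cases h2 : s(i,j) = s(a,b)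
    · rw [hdd_def]; simp only [ddfun, h1, h2, if_false, if_true]
      exact le_of_lt (lt_min ht (add_pos hWa hWb))
    · rw [dd_uu i j h1 h2]; exact add_nonneg (unn i) (unn j)
  -- key min inequalities
  have hua1 : u a ≤ Wa := by rw [hu_a]; exact min_le_left _ _
  have hua2 : u a ≤ Wb + t := by rw [hu_a]; exact min_le_right _ _
  have hub1 : u b ≤ Wb := by rw [hu_b]; exact min_le_left _ _
  have hub2 : u b ≤ Wa + t := by rw [hu_b]; exact min_le_right _ _
  have hdab1 : dab ≤ t := min_le_left _ _
  have hdab2 : dab ≤ Wa + Wb := min_le_right _ _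
  have hab_tri : u a ≤ t + u b := by
    rw [hu_b]; rcases min_cases Wb (Wa + t) with ⟨h1, _⟩|⟨h1, _⟩ <;> rw [h1] <;> linarith
  have hba_tri : u b ≤ t + u a := by
    rw [hu_a]; rcases min_cases Wa (Wb + t) with ⟨h1, _⟩|⟨h1, _⟩ <;> rw [h1] <;> linarith
  have hdab_a : dab ≤ Wa + u b := by
    rw [hu_b]; rcases min_cases Wb (Wa + t) with ⟨h1, _⟩|⟨h1, _⟩ <;> rw [h1] <;> linarith
  have hdab_b : dab ≤ Wb + u a := by
    rw [hu_a]; rcases min_cases Wa (Wb + t) with ⟨h1, _⟩|⟨h1, _⟩ <;> rw [h1] <;> linarith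
  have hux_le : ∀ x, x ≠ c → u x ≤ w s(c,x) := by
    intro x hx
    by_cases h2 : x = a
    · subst h2; exact hua1
    by_cases h3 : x = b
    · subst h3; exact hub1
    · rw [hu_x x hx h2 h3]
  have hub3 : u b ≤ Wa + dab := by
    rcases min_cases t (Wa + Wb) with ⟨h1,_⟩|⟨h1,_⟩ <;> rw [hdab_def, h1] <;> linarith
  have hua3 : u a ≤ Wb + dab := by
    rcases min_cases t (Wa + Wb) with ⟨h1,_⟩|⟨h1,_⟩ <;> rw [hdab_def, h1] <;> linarith
  -- the one-step inequality
  have hstep : ∀ (i k j : Fin n), G.Adj i k → dd i j ≤ w s(i,k) + dd k j := by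
    intro i k j hik
    obtain ⟨hne, hcase⟩ := (hG i k).1 hik
    rcases hcase with hic|hkc|hs
    · -- i = c
      rw [hic]
      have hkc : k ≠ c := fun h => hne (hic.trans h.symm)
      by_cases hjc : j = c
      · rw [hjc, dd_self]
        have h1 : w s(c,k) = w s(k,c) := by rw [Sym2.eq_swap]
        rw [h1]
        have h2 : w s(k,c) = w s(c,k) := by rw [Sym2.eq_swap]
        linarith [dd_nn k c, hWpos k hkc, h2 ▸ hWpos k hkc]
      · rw [dd_c j hjc]
        by_cases hkj : k = j
        · rw [hkj, dd_self, add_zero]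
          exact hux_le j hjc
        by_cases hsk : s(k,j) = s(a,b)
        · rcases Sym2.eq_iff.1 hsk with ⟨hka, hjb⟩|⟨hkb, hja⟩
          · rw [hka, hjb, dd_ab]; exact hub3
          · rw [hkb, hja, dd_ba]; exact hua3
        · rw [dd_uu k j hkj hsk]
          linarith [hux_le k hkc, hWpos k hkc, unn k, upos k hkc]
    · -- k = c
      rw [hkc]
      have hic' : i ≠ c := fun h => hne (h.trans hkc.symm)
      have hwic : w s(i,c) = w s(c,i) := by rw [Sym2.eq_swap]
      rw [hwic]
      by_cases hij : i = j
      · rw [← hij, dd_self]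
        linarith [dd_nn c i, hWpos i hic']
      by_cases hjc : j = c
      · rw [hjc, dd_self, add_zero, dd_symm i c, dd_c i hic']
        exact hux_le i hic'
      · rw [dd_c j hjc]
        by_cases hsij : s(i,j) = s(a,b)
        · rcases Sym2.eq_iff.1 hsij with ⟨hia, hjb⟩|⟨hib, hja⟩
          · rw [hia, hjb, dd_ab]; exact hdab_a
          · rw [hib, hja, dd_ba]; exact hdab_b
        · rw [dd_uu i j hij hsij]
          linarith [hux_le i hic']
    · -- s(i,k) = s(a,b)
      have hwt : w s(i,k) = t := by rw [ht_def, hs]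
      rw [hwt]
      rcases Sym2.eq_iff.1 hs with ⟨hia, hkb⟩|⟨hib, hka⟩
      · rw [hia, hkb]
        by_cases hja : j = a
        · rw [hja, dd_self]; linarith [dd_nn b a]
        by_cases hjb : j = b
        · rw [hjb, dd_ab, dd_self]; linarith [hdab1]
        by_cases hjc : j = c
        · rw [hjc, dd_symm a c, dd_c a hac, dd_symm b c, dd_c b hbc]
          exact hab_tri
        · have hsaj : s(a,j) ≠ s(a,b) := by
            intro hh; rw [Sym2.eq_iff] at hh
            rcases hh with ⟨_,h⟩|⟨h,_⟩; exacts [hjb h, hab h]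
          have hsbj : s(b,j) ≠ s(a,b) := by
            intro hh; rw [Sym2.eq_iff] at hh
            rcases hh with ⟨h,_⟩|⟨_,h⟩; exacts [hab h.symm, hja h]
          rw [dd_uu a j (fun h => hja h.symm) hsaj, dd_uu b j (fun h => hjb h.symm) hsbj]
          linarith [hab_tri]
      · rw [hib, hka]
        by_cases hjb : j = b
        · rw [hjb, dd_self]; linarith [dd_nn a b]
        by_cases hja : j = a
        · rw [hja, dd_ba, dd_self]; linarith [hdab1]
        by_cases hjc : j = c
        · rw [hjc, dd_symm b c, dd_c b hbc, dd_symm a c, dd_c a hac]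
          exact hba_tri
        · have hsaj : s(a,j) ≠ s(a,b) := by
            intro hh; rw [Sym2.eq_iff] at hh
            rcases hh with ⟨_,h⟩|⟨h,_⟩; exacts [hjb h, hab h]
          have hsbj : s(b,j) ≠ s(a,b) := by
            intro hh; rw [Sym2.eq_iff] at hh
            rcases hh with ⟨h,_⟩|⟨_,h⟩; exacts [hab h.symm, hja h]
          rw [dd_uu b j (fun h => hjb h.symm) hsbj, dd_uu a j (fun h => hja h.symm) hsaj]
          linarith [hba_tri]
  -- lower bound over all walks
  have wW_nil : ∀ x : Fin n, walkWeight w (SimpleGraph.Walk.nil : G.Walk x x) = 0 := by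
    intro x; simp [walkWeight]
  have wW_cons : ∀ {x y z : Fin n} (h : G.Adj x y) (p : G.Walk y z),
      walkWeight w (SimpleGraph.Walk.cons h p) = w s(x,y) + walkWeight w p := by
    intro x y z h p; simp [walkWeight]
  have lb : ∀ {i j : Fin n} (p : G.Walk i j), dd i j ≤ walkWeight w p := by
    intro i j p
    induction p with
    | nil => rw [wW_nil, dd_self]
    | @cons x y z h p ih =>
      rw [wW_cons h p]
      calc dd x z ≤ w s(x,y) + dd y z := hstep x y z h
        _ ≤ w s(x,y) + walkWeight w p := by linarith [ih]
  -- nonemptiness and bddBelow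
  have wnn : ∀ {i j : Fin n} (p : G.Walk i j), 0 ≤ walkWeight w p := by
    intro i j p
    apply List.sum_nonneg
    intro x hx
    simp only [List.mem_map] at hx
    obtain ⟨e, he, rfl⟩ := hx
    exact le_of_lt (hw e (p.edges_subset_edgeSet he))
  have hbdd : ∀ i j : Fin n, BddBelow {x | ∃ p : G.Walk i j, walkWeight w p = x} := by
    intro i j
    exact ⟨0, by rintro x ⟨p, rfl⟩; exact wnn p⟩
  have hwalk : ∀ i j : Fin n, Nonempty (G.Walk i j) := by
    intro i j
    by_cases hij : i = j
    · rw [hij]; exact ⟨SimpleGraph.Walk.nil⟩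
    by_cases hic : i = c
    · rw [hic]
      have hjc : j ≠ c := fun h => hij (hic.trans h.symm)
      exact ⟨SimpleGraph.Walk.cons (adjc hjc) SimpleGraph.Walk.nil⟩
    by_cases hjc : j = c
    · rw [hjc]; exact ⟨SimpleGraph.Walk.cons (adjc' hic) SimpleGraph.Walk.nil⟩
    · exact ⟨SimpleGraph.Walk.cons (adjc' hic) (SimpleGraph.Walk.cons (adjc hjc) SimpleGraph.Walk.nil)⟩
  have hne_set : ∀ i j : Fin n, {x | ∃ p : G.Walk i j, walkWeight w p = x}.Nonempty := by
    intro i j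
    obtain ⟨p⟩ := hwalk i j
    exact ⟨walkWeight w p, p, rfl⟩
  have wle : ∀ {i j : Fin n} (p : G.Walk i j), wdist G w i j ≤ walkWeight w p := by
    intro i j p
    exact csInf_le (hbdd i j) ⟨p, rfl⟩
  have wge : ∀ i j : Fin n, dd i j ≤ wdist G w i j := by
    intro i j
    apply le_csInf (hne_set i j)
    rintro x ⟨p, rfl⟩
    exact lb p
  -- symmetry of wdist
  have wsymm : ∀ i j : Fin n, wdist G w i j = wdist G w j i := by
    intro i j
    unfold wdist
    congr 1
    ext x
    constructor
    · rintro ⟨p, rfl⟩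
      exact ⟨p.reverse, by simp [walkWeight, SimpleGraph.Walk.edges_reverse, List.map_reverse, List.sum_reverse]⟩
    · rintro ⟨p, rfl⟩
      exact ⟨p.reverse, by simp [walkWeight, SimpleGraph.Walk.edges_reverse, List.map_reverse, List.sum_reverse]⟩
  -- triangle inequality
  have htri : ∀ x y z : Fin n, wdist G w x z ≤ wdist G w x y + wdist G w y z := by
    intro x y z
    have h1 : ∀ (p : G.Walk x y) (q : G.Walk y z),
        wdist G w x z ≤ walkWeight w p + walkWeight w q := by
      intro p q
      refine le_trans (wle (p.append q)) (le_of_eq ?_)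
      simp [walkWeight, SimpleGraph.Walk.edges_append]
    have h2 : ∀ q : G.Walk y z, wdist G w x z - walkWeight w q ≤ wdist G w x y := by
      intro q
      apply le_csInf (hne_set x y)
      rintro r ⟨p, rfl⟩
      linarith [h1 p q]
    have h3 : wdist G w x z - wdist G w x y ≤ wdist G w y z := by
      apply le_csInf (hne_set y z)
      rintro r ⟨q, rfl⟩
      linarith [h2 q]
    linarith
  -- upper bounds
  have hub_c : ∀ x : Fin n, wdist G w c x ≤ u x := by
    intro x
    by_cases hxc : x = c
    · rw [hxc, hu_c]
      have := wle (SimpleGraph.Walk.nil : G.Walk c c)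
      rw [wW_nil] at this; exact this
    by_cases hxa : x = a
    · rw [hxa, hu_a]
      apply le_min
      · have := wle (SimpleGraph.Walk.cons (adjc hac) SimpleGraph.Walk.nil)
        rw [wW_cons, wW_nil, add_zero] at this; exact this
      · have := wle (SimpleGraph.Walk.cons (adjc hbc) (SimpleGraph.Walk.cons adjba SimpleGraph.Walk.nil))
        rw [wW_cons, wW_cons, wW_nil, add_zero] at this
        have hba : w s(b,a) = w s(a,b) := by rw [Sym2.eq_swap]
        rw [hba] at this
        exact this
    by_cases hxb : x = b
    · rw [hxb, hu_b]
      apply le_min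
      · have := wle (SimpleGraph.Walk.cons (adjc hbc) SimpleGraph.Walk.nil)
        rw [wW_cons, wW_nil, add_zero] at this; exact this
      · have := wle (SimpleGraph.Walk.cons (adjc hac) (SimpleGraph.Walk.cons adjab SimpleGraph.Walk.nil))
        rw [wW_cons, wW_cons, wW_nil, add_zero] at this
        exact this
    · rw [hu_x x hxc hxa hxb]
      have := wle (SimpleGraph.Walk.cons (adjc hxc) SimpleGraph.Walk.nil)
      rw [wW_cons, wW_nil, add_zero] at this; exact this
  have hub_ab : wdist G w a b ≤ dab := by
    apply le_min
    · have := wle (SimpleGraph.Walk.cons adjab SimpleGraph.Walk.nil)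
      rw [wW_cons, wW_nil, add_zero] at this; exact this
    · have := wle (SimpleGraph.Walk.cons (adjc' hac) (SimpleGraph.Walk.cons (adjc hbc) SimpleGraph.Walk.nil))
      rw [wW_cons, wW_cons, wW_nil, add_zero] at this
      have hca : w s(a,c) = w s(c,a) := by rw [Sym2.eq_swap]
      rw [hca] at this
      exact this
  have hub : ∀ i j : Fin n, wdist G w i j ≤ dd i j := by
    intro i j
    by_cases hij : i = j
    · rw [hij, dd_self]
      have := wle (SimpleGraph.Walk.nil : G.Walk j j)
      rw [wW_nil] at this; exact this
    by_cases hsij : s(i,j) = s(a,b)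
    · rcases Sym2.eq_iff.1 hsij with ⟨hia, hjb⟩|⟨hib, hja⟩
      · rw [hia, hjb, dd_ab]; exact hub_ab
      · rw [hib, hja, dd_ba, wsymm b a]; exact hub_ab
    · rw [dd_uu i j hij hsij]
      calc wdist G w i j ≤ wdist G w i c + wdist G w c j := htri i c j
        _ ≤ u i + u j := by
            have h1 : wdist G w i c ≤ u i := by rw [wsymm i c]; exact hub_c i
            linarith [hub_c j]
  intro i j
  exact le_antisymm (hub i j) (wge i j)

end graphpart

section quadpart
variable {n : ℕ} (c a b : Fin n) (w : Sym2 (Fin n) → ℝ)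

lemma ddfun_decomp (hab : a ≠ b) (i j : Fin n) :
    ddfun c a b w i j = ufun c a b w i + ufun c a b w j
      - (if i = j then 2 * ufun c a b w i else 0)
      - (if i = a ∧ j = b then
          ufun c a b w a + ufun c a b w b - min (w s(a,b)) (w s(c,a) + w s(c,b)) else 0)
      - (if i = b ∧ j = a then
          ufun c a b w a + ufun c a b w b - min (w s(a,b)) (w s(c,a) + w s(c,b)) else 0) := by
  classical
  by_cases hij : i = j
  · subst hij
    have h1 : ¬(i = a ∧ i = b) := fun ⟨p, q⟩ => hab (p.symm.trans q)
    have h2 : ¬(i = b ∧ i = a) := fun ⟨p, q⟩ => hab (q.symm.trans p)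
    simp [ddfun, h1, h2]
    try ring
  · by_cases hs : s(i,j) = s(a,b)
    · rcases Sym2.eq_iff.1 hs with ⟨hia, hjb⟩|⟨hib, hja⟩
      · subst hia; subst hjb
        have h2 : ¬(i = j ∧ j = i) := fun ⟨p, _⟩ => hij p
        simp [ddfun, hij, h2]
        try ring
      · subst hib; subst hja
        have h2 : ¬(i = j ∧ j = i) := fun ⟨p, _⟩ => hij p
        have hs' : s(i,j) = s(j,i) := Sym2.eq_swap
        simp [ddfun, hij, h2, hs']
        try ring
    · have h1 : ¬(i = a ∧ j = b) := fun ⟨p, q⟩ => hs (by rw [p, q])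
      have h2 : ¬(i = b ∧ j = a) := by
        rintro ⟨p, q⟩
        exact hs (by rw [p, q]; exact Sym2.eq_swap)
      simp [ddfun, hij, hs, h1, h2]

lemma quad_dd (hab : a ≠ b) (x : Fin n → ℝ) (hx : ∑ i, x i = 0) :
    x ⬝ᵥ (Matrix.of fun i j => ddfun c a b w i j) *ᵥ x
      = -2 * (∑ i, ufun c a b w i * x i ^ 2)
        - 2 * (ufun c a b w a + ufun c a b w b - min (w s(a,b)) (w s(c,a) + w s(c,b)))
          * (x a * x b) := by
  classical
  have step1 : x ⬝ᵥ (Matrix.of fun i j => ddfun c a b w i j) *ᵥ x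
      = ∑ i, ∑ j, x i * (ddfun c a b w i j * x j) := by
    simp [dotProduct, Matrix.mulVec, Finset.mul_sum]
  rw [step1]
  have step2 : ∀ i j : Fin n, x i * (ddfun c a b w i j * x j)
      = (x i * ufun c a b w i * x j + x i * (ufun c a b w j * x j))
        - (if i = j then 2 * ufun c a b w i else 0) * (x i * x j)
        - (if i = a ∧ j = b then
            ufun c a b w a + ufun c a b w b - min (w s(a,b)) (w s(c,a) + w s(c,b)) else 0)
            * (x i * x j)
        - (if i = b ∧ j = a then
            ufun c a b w a + ufun c a b w b - min (w s(a,b)) (w s(c,a) + w s(c,b)) else 0)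
            * (x i * x j) := by
    intro i j
    rw [ddfun_decomp c a b w hab i j]
    ring
  simp only [step2]
  rw [Finset.sum_congr rfl (fun i _ => by
    rw [Finset.sum_sub_distrib, Finset.sum_sub_distrib, Finset.sum_sub_distrib,
        Finset.sum_add_distrib])]
  rw [Finset.sum_sub_distrib, Finset.sum_sub_distrib, Finset.sum_sub_distrib,
      Finset.sum_add_distrib]
  have A1 : ∑ i, ∑ j, x i * ufun c a b w i * x j = 0 := by
    have h : ∀ i : Fin n, ∑ j, x i * ufun c a b w i * x j = 0 := by
      intro i; rw [← Finset.mul_sum, hx, mul_zero]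
    simp [h]
  have A2 : ∑ i : Fin n, ∑ j, x i * (ufun c a b w j * x j) = 0 := by
    have h : ∀ i : Fin n, ∑ j, x i * (ufun c a b w j * x j)
        = x i * ∑ j, ufun c a b w j * x j := by
      intro i; rw [Finset.mul_sum]
    rw [Finset.sum_congr rfl (fun i _ => h i), ← Finset.sum_mul, hx, zero_mul]
  have A3 : ∑ i, ∑ j, (if i = j then 2 * ufun c a b w i else 0) * (x i * x j)
      = 2 * ∑ i, ufun c a b w i * x i ^ 2 := by
    rw [Finset.mul_sum]
    apply Finset.sum_congr rfl
    intro i _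
    simp only [ite_mul, zero_mul]
    rw [Finset.sum_ite_eq (Finset.univ) i (fun j => 2 * ufun c a b w i * (x i * x j))]
    simp only [Finset.mem_univ, if_true]
    ring
  set s0 : ℝ := ufun c a b w a + ufun c a b w b - min (w s(a,b)) (w s(c,a) + w s(c,b)) with hs0
  have A4 : ∑ i, ∑ j, (if i = a ∧ j = b then s0 else 0) * (x i * x j) = s0 * (x a * x b) := by
    have h : ∀ i : Fin n, ∑ j, (if i = a ∧ j = b then s0 else 0) * (x i * x j)
        = if i = a then s0 * (x i * x b) else 0 := by
      intro i
      by_cases hia : i = a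
      · simp only [hia, true_and, if_true, ite_mul, zero_mul]
        rw [Finset.sum_ite_eq' (Finset.univ) b (fun j => s0 * (x a * x j))]
        simp
      · simp [hia]
    rw [Finset.sum_congr rfl (fun i _ => h i)]
    rw [Finset.sum_ite_eq' (Finset.univ) a (fun i => s0 * (x i * x b))]
    simp
  have A5 : ∑ i, ∑ j, (if i = b ∧ j = a then s0 else 0) * (x i * x j) = s0 * (x b * x a) := by
    have h : ∀ i : Fin n, ∑ j, (if i = b ∧ j = a then s0 else 0) * (x i * x j)
        = if i = b then s0 * (x i * x a) else 0 := by
      intro i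
      by_cases hib : i = b
      · simp only [hib, true_and, if_true, ite_mul, zero_mul]
        rw [Finset.sum_ite_eq' (Finset.univ) a (fun j => s0 * (x b * x j))]
        simp
      · simp [hib]
    rw [Finset.sum_congr rfl (fun i _ => h i)]
    rw [Finset.sum_ite_eq' (Finset.univ) b (fun i => s0 * (x i * x a))]
    simp
  rw [A1, A2, A3, A4, A5]
  ring

lemma ufun_pos (hab : a ≠ b) (hac : a ≠ c) (hbc : b ≠ c)
    (hwa : 0 < w s(c,a)) (hwb : 0 < w s(c,b)) (ht : 0 < w s(a,b))
    (hw' : ∀ x : Fin n, x ≠ c → x ≠ a → x ≠ b → 0 < w s(c,x)) :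
    ∀ x : Fin n, x ≠ c → 0 < ufun c a b w x := by
  intro x hx
  by_cases h2 : x = a
  · rw [h2, show ufun c a b w a = min (w s(c,a)) (w s(c,b) + w s(a,b)) by simp [ufun, hac]]; positivity
  by_cases h3 : x = b
  · rw [h3, show ufun c a b w b = min (w s(c,b)) (w s(c,a) + w s(a,b)) by simp [ufun, hbc, Ne.symm hab]]; positivity
  · simp only [ufun, if_neg hx, if_neg h2, if_neg h3]; exact hw' x hx h2 h3

lemma s0_facts (hab : a ≠ b) (hac : a ≠ c) (hbc : b ≠ c)
    (hwa : 0 < w s(c,a)) (hwb : 0 < w s(c,b)) (ht : 0 < w s(a,b)) :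
    0 ≤ ufun c a b w a + ufun c a b w b - min (w s(a,b)) (w s(c,a) + w s(c,b)) ∧
    (ufun c a b w a + ufun c a b w b - min (w s(a,b)) (w s(c,a) + w s(c,b)))^2
      < 4 * ufun c a b w a * ufun c a b w b := by
  have hu_a : ufun c a b w a = min (w s(c,a)) (w s(c,b) + w s(a,b)) := by
    simp [ufun, hac]
  have hu_b : ufun c a b w b = min (w s(c,b)) (w s(c,a) + w s(a,b)) := by
    simp [ufun, hbc, Ne.symm hab]
  set Wa := w s(c,a)
  set Wb := w s(c,b)
  set t := w s(a,b)
  set ua := ufun c a b w a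
  set ub := ufun c a b w b
  set d := min t (Wa + Wb) with hd_def
  have hua_pos : 0 < ua := by rw [hu_a]; positivity
  have hub_pos : 0 < ub := by rw [hu_b]; positivity
  have hd_pos : 0 < d := by rw [hd_def]; positivity
  have hua1 : ua ≤ Wa := by rw [hu_a]; exact min_le_left _ _
  have hua2 : ua ≤ Wb + t := by rw [hu_a]; exact min_le_right _ _
  have hub1 : ub ≤ Wb := by rw [hu_b]; exact min_le_left _ _
  have hub2 : ub ≤ Wa + t := by rw [hu_b]; exact min_le_right _ _
  have hd1 : d ≤ t := min_le_left _ _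
  have hd2 : d ≤ Wa + Wb := min_le_right _ _
  have htri1 : ua ≤ ub + d := by
    rcases min_cases Wb (Wa + t) with ⟨h1,_⟩|⟨h1,_⟩ <;>
      rcases min_cases t (Wa + Wb) with ⟨h2,_⟩|⟨h2,_⟩ <;>
        rw [hu_b, h1, hd_def, h2] <;> linarith
  have htri2 : ub ≤ ua + d := by
    rcases min_cases Wa (Wb + t) with ⟨h1,_⟩|⟨h1,_⟩ <;>
      rcases min_cases t (Wa + Wb) with ⟨h2,_⟩|⟨h2,_⟩ <;>
        rw [hu_a, h1, hd_def, h2] <;> linarith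
  have htri3 : d ≤ ua + ub := by
    rcases min_cases Wa (Wb + t) with ⟨h1,_⟩|⟨h1,_⟩ <;>
      rcases min_cases Wb (Wa + t) with ⟨h2,_⟩|⟨h2,_⟩ <;>
        rw [hu_a, h1, hu_b, h2] <;> linarith
  constructor
  · linarith
  · by_cases hz : ua + ub - d = 0
    · rw [hz]
      nlinarith [mul_pos hua_pos hub_pos]
    · have hs_pos : 0 < ua + ub - d := lt_of_le_of_ne (by linarith) (Ne.symm hz)
      have hA : 0 ≤ (d - (ua - ub)) * (d - (ub - ua)) :=
        mul_nonneg (by linarith) (by linarith)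
      have hB : 0 < d * (ua + ub - d) := mul_pos hd_pos hs_pos
      nlinarith [hA, hB]

end quadpart

lemma key_pos {n : ℕ} (u : Fin n → ℝ) (c a b : Fin n) (s0 : ℝ)
    (hab : a ≠ b) (hac : a ≠ c) (hbc : b ≠ c)
    (hupos : ∀ i, i ≠ c → 0 < u i) (hnn : ∀ i, 0 ≤ u i)
    (hs0 : 0 ≤ s0) (hs2 : s0 ^ 2 < 4 * u a * u b)
    (x : Fin n → ℝ) (hx : ∑ i, x i = 0) (hx0 : x ≠ 0) :
    0 < (∑ i, u i * x i ^ 2) + s0 * (x a * x b) := by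
  classical
  have hxs : ∃ i, i ≠ c ∧ x i ≠ 0 := by
    by_contra h
    push_neg at h
    have h' : ∀ i, i ≠ c → x i = 0 := fun i hi => h i hi
    have hxc : ∑ i, x i = x c :=
      Finset.sum_eq_single c (fun i _ hi => h' i hi) (by simp)
    have hc0 : x c = 0 := by rw [← hxc]; exact hx
    apply hx0
    funext i
    by_cases hi : i = c
    · rw [hi]; exact hc0
    · exact h' i hi
  obtain ⟨i0, hi0c, hi0⟩ := hxs
  have hterm : ∀ i, 0 ≤ u i * x i ^ 2 := fun i => mul_nonneg (hnn i) (sq_nonneg _)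
  have hsq0 : 0 < x i0 ^ 2 :=
    lt_of_le_of_ne (sq_nonneg _) (Ne.symm (pow_ne_zero 2 hi0))
  by_cases hb0 : x a * x b = 0
  · have hsum : 0 < ∑ i, u i * x i ^ 2 :=
      Finset.sum_pos' (fun i _ => hterm i)
        ⟨i0, Finset.mem_univ _, mul_pos (hupos i0 hi0c) hsq0⟩
    rw [hb0, mul_zero]
    linarith
  · have hxa : x a ≠ 0 := fun h => hb0 (by rw [h, zero_mul])
    have hxb : x b ≠ 0 := fun h => hb0 (by rw [h, mul_zero])
    have hsub : u a * x a ^ 2 + u b * x b ^ 2 ≤ ∑ i, u i * x i ^ 2 := by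
      have h := Finset.sum_le_sum_of_subset_of_nonneg
        (Finset.subset_univ ({a, b} : Finset (Fin n))) (fun i _ _ => hterm i)
      rwa [Finset.sum_pair hab] at h
    have hb2 : 0 < x b ^ 2 :=
      lt_of_le_of_ne (sq_nonneg _) (Ne.symm (pow_ne_zero 2 hxb))
    have h4 : 0 < (4 * u a * u b - s0 ^ 2) * x b ^ 2 := mul_pos (by linarith) hb2
    nlinarith [sq_nonneg (2 * u a * x a + s0 * x b), hupos a hac, h4, hsub]

/-- A simple star on `n ≥ 4` vertices (center `c`) with one additional
edge between two non-central vertices `a`, `b`, with positive edge weights, has a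
strongly unipositive distance matrix: inertia `(1, 0, n-1)`. -/
theorem star_plus_edge_inertia (n : ℕ) (hn : 4 ≤ n) (G : SimpleGraph (Fin n))
    (c a b : Fin n) (hab : a ≠ b) (hac : a ≠ c) (hbc : b ≠ c)
    (hG : ∀ i j, G.Adj i j ↔ i ≠ j ∧ (i = c ∨ j = c ∨ s(i, j) = s(a, b)))
    (w : Sym2 (Fin n) → ℝ) (hw : ∀ e ∈ G.edgeSet, 0 < w e)
    (hD : (distMatrix G w).IsHermitian) :
    posEig hD = 1 ∧ zeroEig hD = 0 ∧ negEig hD = n - 1 := by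
  classical
  have adjca : G.Adj c a := (hG c a).2 ⟨Ne.symm hac, Or.inl rfl⟩
  have adjcb : G.Adj c b := (hG c b).2 ⟨Ne.symm hbc, Or.inl rfl⟩
  have adjab : G.Adj a b := (hG a b).2 ⟨hab, Or.inr (Or.inr rfl)⟩
  have hwa : 0 < w s(c,a) := hw _ (G.mem_edgeSet.2 adjca)
  have hwb : 0 < w s(c,b) := hw _ (G.mem_edgeSet.2 adjcb)
  have ht : 0 < w s(a,b) := hw _ (G.mem_edgeSet.2 adjab)
  have hw' : ∀ x : Fin n, x ≠ c → x ≠ a → x ≠ b → 0 < w s(c,x) := fun x hx _ _ =>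
    hw _ (G.mem_edgeSet.2 ((hG c x).2 ⟨Ne.symm hx, Or.inl rfl⟩))
  have main := wdist_eq_ddfun G c a b w hab hac hbc hG hw
  have hDeq : distMatrix G w = Matrix.of fun i j => ddfun c a b w i j := by
    ext i j; exact main i j
  have hupos := ufun_pos c a b w hab hac hbc hwa hwb ht hw'
  obtain ⟨hs0nn, hs2⟩ := s0_facts c a b w hab hac hbc hwa hwb ht
  have hnn : ∀ i, 0 ≤ ufun c a b w i := by
    intro i
    by_cases hi : i = c
    · rw [hi]; simp [ufun]
    · exact le_of_lt (hupos i hi)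
  have hn1 : 1 ≤ n := by omega
  have hneg : ∀ x : Fin n → ℝ, x ≠ 0 → (∑ i, x i) = 0 →
      x ⬝ᵥ (distMatrix G w) *ᵥ x < 0 := by
    intro x hx0 hxs
    rw [hDeq, quad_dd c a b w hab x hxs]
    have hk := key_pos (ufun c a b w) c a b _ hab hac hbc hupos hnn hs0nn hs2 x hxs hx0
    linarith
  have hsca : ¬ s(c,a) = s(a,b) := by
    intro h
    rcases Sym2.eq_iff.1 h with ⟨p,_⟩|⟨p,_⟩
    exacts [hac p.symm, hbc p.symm]
  have hsac : ¬ s(a,c) = s(a,b) := by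
    intro h
    rcases Sym2.eq_iff.1 h with ⟨_,p⟩|⟨p,_⟩
    exacts [hbc p.symm, hab p]
  have hDcc : (distMatrix G w) c c = 0 := by rw [hDeq]; simp [ddfun]
  have hDaa : (distMatrix G w) a a = 0 := by rw [hDeq]; simp [ddfun]
  have hDca : (distMatrix G w) c a = ufun c a b w a := by
    rw [hDeq]
    have h1 : ¬ c = a := fun h => hac h.symm
    show ddfun c a b w c a = ufun c a b w a
    rw [ddfun, if_neg h1, if_neg hsca]
    simp [ufun]
  have hDac : (distMatrix G w) a c = ufun c a b w a := by
    rw [hDeq]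
    show ddfun c a b w a c = ufun c a b w a
    rw [ddfun, if_neg hac, if_neg hsac]
    simp [ufun]
  set x₀ : Fin n → ℝ := Pi.single c 1 + Pi.single a 1 with hx₀
  have hq : x₀ ⬝ᵥ (distMatrix G w) *ᵥ x₀
      = (distMatrix G w) c c + (distMatrix G w) c a
        + ((distMatrix G w) a c + (distMatrix G w) a a) := by
    rw [hx₀]
    simp [Matrix.mulVec_add, Matrix.mulVec_single, add_dotProduct,
      dotProduct_add, single_dotProduct]
    ring
  have hpos : 0 < x₀ ⬝ᵥ (distMatrix G w) *ᵥ x₀ := by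
    rw [hq, hDcc, hDaa, hDca, hDac]
    have := hupos a hac
    linarith
  obtain ⟨h1, h2, h3⟩ := inertia_main hn1 hD hneg x₀ hpos
  exact ⟨h1, h2, h3⟩
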